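/- For s ∈ (0,1), the function u₁(x₁,x₂) := (√(x₁²+x₂²)+x₁)^s · (s√(x₁²+x₂²) − x₁) satisfies ∂₁(x₂^{1−2s}∂₁u₁) + ∂₂(x₂^{1−2s}∂₂u₁) = 0 on the open upper half-plane {x₂ > 0}. -/

import Mathlib

open Real

/-- The `(1+s)`-homogeneous solution `u₁ = w_{0,s}(x₁,x₂)(s r - x₁)` of the
two-dimensional mixed Dirichlet–Neumann problem. -/
noncomputable def u1 (s x₁ x₂ : ℝ) : ℝ :=
  (Real.sqrt (x₁ ^ 2 + x₂ ^ 2) + x₁) ^ s * (s * Real.sqrt (x₁ ^ 2 + x₂ ^ 2) - x₁)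

/-- Derivative of `a ↦ √(a² + c²)` when `c > 0`. -/
lemma hasDerivAt_q1 (c t : ℝ) (hc : 0 < c) :
    HasDerivAt (fun a : ℝ => Real.sqrt (a ^ 2 + c ^ 2))
      (t / Real.sqrt (t ^ 2 + c ^ 2)) t := by
  have hpos : (0:ℝ) < t ^ 2 + c ^ 2 := by positivity
  have h1 : HasDerivAt (fun a : ℝ => a ^ 2 + c ^ 2) (2 * t) t := by
    simpa using (hasDerivAt_pow 2 t).add_const (c ^ 2)
  have h2 := (Real.hasDerivAt_sqrt hpos.ne').comp t h1
  have hq : 0 < Real.sqrt (t ^ 2 + c ^ 2) := Real.sqrt_pos.mpr hpos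
  refine h2.congr_deriv ?_
  field_simp

/-- Derivative of `b ↦ √(c² + b²)` when `t > 0`. -/
lemma hasDerivAt_q2 (c t : ℝ) (ht : 0 < t) :
    HasDerivAt (fun b : ℝ => Real.sqrt (c ^ 2 + b ^ 2))
      (t / Real.sqrt (c ^ 2 + t ^ 2)) t := by
  have hpos : (0:ℝ) < c ^ 2 + t ^ 2 := by positivity
  have h1 : HasDerivAt (fun b : ℝ => c ^ 2 + b ^ 2) (2 * t) t := by
    simpa using ((hasDerivAt_pow 2 t).const_add (c ^ 2))
  have h2 := (Real.hasDerivAt_sqrt hpos.ne').comp t h1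
  have hq : 0 < Real.sqrt (c ^ 2 + t ^ 2) := Real.sqrt_pos.mpr hpos
  refine h2.congr_deriv ?_
  field_simp

lemma sqrt_add_pos1 (c t : ℝ) (hc : 0 < c) : 0 < Real.sqrt (t ^ 2 + c ^ 2) + t := by
  have h : |t| < Real.sqrt (t ^ 2 + c ^ 2) := by
    rw [← Real.sqrt_sq_eq_abs]
    exact Real.sqrt_lt_sqrt (by positivity) (by nlinarith)
  have := neg_abs_le t
  linarith

lemma sqrt_add_pos2 (c t : ℝ) (ht : 0 < t) : 0 < Real.sqrt (c ^ 2 + t ^ 2) + c := by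
  have h : |c| < Real.sqrt (c ^ 2 + t ^ 2) := by
    rw [← Real.sqrt_sq_eq_abs]
    exact Real.sqrt_lt_sqrt (by positivity) (by nlinarith)
  have := neg_abs_le c
  linarith

/-- Derivative of `a ↦ (√(a²+c²)+a)^p`. -/
lemma hasDerivAt_w1 (c t p : ℝ) (hc : 0 < c) :
    HasDerivAt (fun a : ℝ => (Real.sqrt (a ^ 2 + c ^ 2) + a) ^ p)
      (p * (Real.sqrt (t ^ 2 + c ^ 2) + t) ^ (p - 1)
        * (t / Real.sqrt (t ^ 2 + c ^ 2) + 1)) t := by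
  have hqt := sqrt_add_pos1 c t hc
  have hin : HasDerivAt (fun a : ℝ => Real.sqrt (a ^ 2 + c ^ 2) + a)
      (t / Real.sqrt (t ^ 2 + c ^ 2) + 1) t :=
    (hasDerivAt_q1 c t hc).add (hasDerivAt_id t)
  have := hin.rpow_const (p := p) (Or.inl hqt.ne')
  convert this using 1
  ring

/-- Derivative of `b ↦ (√(c²+b²)+c)^p` for `t > 0`. -/
lemma hasDerivAt_w2 (c t p : ℝ) (ht : 0 < t) :
    HasDerivAt (fun b : ℝ => (Real.sqrt (c ^ 2 + b ^ 2) + c) ^ p)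
      (p * (Real.sqrt (c ^ 2 + t ^ 2) + c) ^ (p - 1)
        * (t / Real.sqrt (c ^ 2 + t ^ 2))) t := by
  have hqc := sqrt_add_pos2 c t ht
  have hin : HasDerivAt (fun b : ℝ => Real.sqrt (c ^ 2 + b ^ 2) + c)
      (t / Real.sqrt (c ^ 2 + t ^ 2)) t :=
    (hasDerivAt_q2 c t ht).add_const c
  have := hin.rpow_const (p := p) (Or.inl hqc.ne')
  convert this using 1
  ring

/-- `∂₁ u₁ = (s²-1)(r+x₁)^s`. -/
lemma hasDerivAt_u1_fst (s x₂ : ℝ) (hx₂ : 0 < x₂) (t : ℝ) :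
    HasDerivAt (fun a => u1 s a x₂)
      ((s ^ 2 - 1) * (Real.sqrt (t ^ 2 + x₂ ^ 2) + t) ^ s) t := by
  set q := Real.sqrt (t ^ 2 + x₂ ^ 2) with hqdef
  have hq : 0 < q := Real.sqrt_pos.mpr (by positivity)
  have hqt : 0 < q + t := sqrt_add_pos1 x₂ t hx₂
  have hw := hasDerivAt_w1 x₂ t s hx₂
  have hv : HasDerivAt (fun a : ℝ => s * Real.sqrt (a ^ 2 + x₂ ^ 2) - a)
      (s * (t / q) - 1) t :=
    ((hasDerivAt_q1 x₂ t hx₂).const_mul s).sub (hasDerivAt_id t)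
  have H := hw.mul hv
  have hpow : (q + t) ^ s = (q + t) ^ (s - 1) * (q + t) := by
    rw [← Real.rpow_add_one hqt.ne']
    congr 1
    ring
  refine H.congr_deriv ?_
  rw [hpow]
  field_simp
  ring

/-- `∂₂ u₁ = s(s+1) x₂ (r+x₁)^{s-1}` for `x₂ > 0`. -/
lemma hasDerivAt_u1_snd (s x₁ : ℝ) (t : ℝ) (ht : 0 < t) :
    HasDerivAt (fun b => u1 s x₁ b)
      (s * (s + 1) * t * (Real.sqrt (x₁ ^ 2 + t ^ 2) + x₁) ^ (s - 1)) t := by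
  set q := Real.sqrt (x₁ ^ 2 + t ^ 2) with hqdef
  have hq : 0 < q := Real.sqrt_pos.mpr (by positivity)
  have hqx : 0 < q + x₁ := sqrt_add_pos2 x₁ t ht
  have hw := hasDerivAt_w2 x₁ t s ht
  have hv : HasDerivAt (fun b : ℝ => s * Real.sqrt (x₁ ^ 2 + b ^ 2) - x₁)
      (s * (t / q)) t := by
    simpa using (((hasDerivAt_q2 x₁ t ht).const_mul s).sub_const x₁)
  have H := hw.mul hv
  have hpow : (q + x₁) ^ s = (q + x₁) ^ (s - 1) * (q + x₁) := by
    rw [← Real.rpow_add_one hqx.ne']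
    congr 1
    ring
  refine H.congr_deriv ?_
  rw [hpow]
  field_simp
  ring

/-- `u₁` satisfies `∂₁(x₂^{1-2s}∂₁u₁) + ∂₂(x₂^{1-2s}∂₂u₁) = 0` in the open upper
half-plane. -/
theorem stmt9 (s : ℝ) (hs : s ∈ Set.Ioo (0 : ℝ) 1) (x₁ x₂ : ℝ) (hx₂ : 0 < x₂) :
    deriv (fun t => x₂ ^ (1 - 2 * s) * deriv (fun a => u1 s a x₂) t) x₁
      + deriv (fun t => t ^ (1 - 2 * s) * deriv (fun b => u1 s x₁ b) t) x₂ = 0 := by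
  set r := Real.sqrt (x₁ ^ 2 + x₂ ^ 2) with hrdef
  have hr : 0 < r := Real.sqrt_pos.mpr (by positivity)
  have hr2 : r ^ 2 = x₁ ^ 2 + x₂ ^ 2 := Real.sq_sqrt (by positivity)
  have hrx : 0 < r + x₁ := sqrt_add_pos2 x₁ x₂ hx₂
  -- First term
  have e1 : (fun t => x₂ ^ (1 - 2 * s) * deriv (fun a => u1 s a x₂) t)
      = fun t => x₂ ^ (1 - 2 * s) *
        ((s ^ 2 - 1) * (Real.sqrt (t ^ 2 + x₂ ^ 2) + t) ^ s) := by
    funext t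
    rw [(hasDerivAt_u1_fst s x₂ hx₂ t).deriv]
  have h1 : HasDerivAt
      (fun t => x₂ ^ (1 - 2 * s) * deriv (fun a => u1 s a x₂) t)
      (x₂ ^ (1 - 2 * s) * ((s ^ 2 - 1) *
        (s * (r + x₁) ^ (s - 1) * (x₁ / r + 1)))) x₁ := by
    rw [e1]
    exact ((hasDerivAt_w1 x₂ x₁ s hx₂).const_mul (s ^ 2 - 1)).const_mul _
  -- Second term: the inner deriv equals the formula in a neighborhood of x₂
  have e2 : (fun t => t ^ (1 - 2 * s) * deriv (fun b => u1 s x₁ b) t)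
      =ᶠ[nhds x₂] fun t => t ^ (1 - 2 * s) *
        (s * (s + 1) * t * (Real.sqrt (x₁ ^ 2 + t ^ 2) + x₁) ^ (s - 1)) := by
    filter_upwards [eventually_gt_nhds hx₂] with t ht
    rw [(hasDerivAt_u1_snd s x₁ t ht).deriv]
  have hA : HasDerivAt (fun t : ℝ => t ^ (1 - 2 * s))
      ((1 - 2 * s) * x₂ ^ (1 - 2 * s - 1)) x₂ :=
    Real.hasDerivAt_rpow_const (Or.inl hx₂.ne')
  have hB : HasDerivAt
      (fun t => s * (s + 1) * t * (Real.sqrt (x₁ ^ 2 + t ^ 2) + x₁) ^ (s - 1))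
      (s * (s + 1) * (r + x₁) ^ (s - 1)
        + s * (s + 1) * x₂ *
          ((s - 1) * (r + x₁) ^ (s - 1 - 1) * (x₂ / r))) x₂ := by
    have hid : HasDerivAt (fun t : ℝ => s * (s + 1) * t) (s * (s + 1)) x₂ := by
      simpa using (hasDerivAt_id x₂).const_mul (s * (s + 1))
    exact hid.mul (hasDerivAt_w2 x₁ x₂ (s - 1) hx₂)
  have h2 : HasDerivAt
      (fun t => t ^ (1 - 2 * s) * deriv (fun b => u1 s x₁ b) t)
      ((1 - 2 * s) * x₂ ^ (1 - 2 * s - 1) *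
        (s * (s + 1) * x₂ * (r + x₁) ^ (s - 1))
        + x₂ ^ (1 - 2 * s) *
          (s * (s + 1) * (r + x₁) ^ (s - 1)
            + s * (s + 1) * x₂ *
              ((s - 1) * (r + x₁) ^ (s - 1 - 1) * (x₂ / r)))) x₂ := by
    exact (hA.mul hB).congr_of_eventuallyEq e2
  rw [h1.deriv, h2.deriv]
  -- Algebraic identity
  set P := (r + x₁) ^ (s - 1 - 1) with hPdef
  set Q := x₂ ^ (1 - 2 * s - 1) with hQdef
  have hp1 : (r + x₁) ^ (s - 1) = P * (r + x₁) := by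
    rw [hPdef, ← Real.rpow_add_one hrx.ne']
    congr 1
    ring
  have hq1 : x₂ ^ (1 - 2 * s) = Q * x₂ := by
    rw [hQdef, ← Real.rpow_add_one hx₂.ne']
    congr 1
    ring
  rw [hp1, hq1]
  field_simp
  linear_combination (Q * P * x₂ * s * (1 - s ^ 2)) * hr2
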